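/- Let A be an ℕ-graded commutative Noetherian ring generated over A_0 by elements of degree 1, and let M be a finitely generated ℤ-graded A-module. Then the sheaf-theoretic vanishing criterion holds purely algebraically: M[a⁻¹]_0 = 0 for every homogeneous a of degree 1 if and only if there exists N such that M_n = 0 for all n ≥ N. -/

import Mathlib

variable {A : Type*} [CommRing A]

/-- The degree-zero part of the graded localization `M[a⁻¹]` of a ℤ-graded module `M`
(`a` of degree 1), spanned by fractions `m / aⁿ` with `m` homogeneous of degree `n`. -/
noncomputable def modDegZero (𝒜 : ℤ → Submodule ℤ A) [GradedAlgebra 𝒜] (a : A)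
    (M : Type*) [AddCommGroup M] [Module A M] (ℳ : ℤ → AddSubgroup M) :
    @Submodule (HomogeneousLocalization.Away 𝒜 a) (LocalizedModule (Submonoid.powers a) M) _ _
      (Module.compHom _
        (algebraMap (HomogeneousLocalization.Away 𝒜 a)
          (Localization (Submonoid.powers a)))) :=
  letI := Module.compHom (LocalizedModule (Submonoid.powers a) M)
    (algebraMap (HomogeneousLocalization.Away 𝒜 a) (Localization (Submonoid.powers a)))
  Submodule.span (HomogeneousLocalization.Away 𝒜 a)
    {y | ∃ (n : ℕ) (m : M), m ∈ ℳ (n : ℤ) ∧ (a ^ n : A) • y = LocalizedModule.mk m 1}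

section Aux

lemma modDegZero_eq_bot_iff (𝒜 : ℤ → Submodule ℤ A) [GradedAlgebra 𝒜] (a : A)
    (M : Type*) [AddCommGroup M] [Module A M] (ℳ : ℤ → AddSubgroup M) :
    modDegZero 𝒜 a M ℳ = ⊥ ↔
      ∀ y : LocalizedModule (Submonoid.powers a) M,
        (∃ (n : ℕ) (m : M), m ∈ ℳ (n : ℤ) ∧ (a ^ n : A) • y = LocalizedModule.mk m 1) →
        y = 0 := by
  letI := Module.compHom (LocalizedModule (Submonoid.powers a) M)
    (algebraMap (HomogeneousLocalization.Away 𝒜 a) (Localization (Submonoid.powers a)))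
  constructor
  · intro h y hy
    have h1 : y ∈ modDegZero 𝒜 a M ℳ := Submodule.subset_span hy
    rw [h, Submodule.mem_bot] at h1
    exact h1
  · intro h
    have h2 : modDegZero 𝒜 a M ℳ ≤ ⊥ :=
      Submodule.span_le.mpr fun y hy => (Submodule.mem_bot _).mpr (h y hy)
    exact le_bot_iff.mp h2

variable {M : Type*} [AddCommGroup M]

/-- projection onto degree `n` as an `AddMonoidHom`. -/
noncomputable def projM (ℳ : ℤ → AddSubgroup M) [DirectSum.Decomposition ℳ] (n : ℤ) :
    M →+ M where
  toFun x := (DirectSum.decompose ℳ x n : M)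
  map_zero' := by dsimp only; rw [DirectSum.decompose_zero]; simp
  map_add' x y := by dsimp only; rw [DirectSum.decompose_add]; simp

lemma projM_apply (ℳ : ℤ → AddSubgroup M) [DirectSum.Decomposition ℳ] (n : ℤ) (x : M) :
    projM ℳ n x = (DirectSum.decompose ℳ x n : M) := rfl

variable [Module A M]

lemma decompose_smul_homog
    (𝒜 : ℤ → Submodule ℤ A) [GradedAlgebra 𝒜] (ℳ : ℤ → AddSubgroup M)
    [DirectSum.Decomposition ℳ]
    (hℳ : ∀ (i j : ℤ), ∀ c ∈ 𝒜 i, ∀ m ∈ ℳ j, c • m ∈ ℳ (i + j))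
    (r : A) {h : M} {d : ℤ} (hh : h ∈ ℳ d) (n : ℤ) :
    (DirectSum.decompose ℳ (r • h) n : M) = (DirectSum.decompose 𝒜 r (n - d) : A) • h := by
  classical
  have hsum : r • h = ∑ i ∈ (DirectSum.decompose 𝒜 r).support,
      (DirectSum.decompose 𝒜 r i : A) • h := by
    rw [← Finset.sum_smul, DirectSum.sum_support_decompose]
  rw [← projM_apply, hsum, map_sum]
  have step : ∀ i ∈ (DirectSum.decompose 𝒜 r).support,
      projM ℳ n ((DirectSum.decompose 𝒜 r i : A) • h)
        = if i = n - d then (DirectSum.decompose 𝒜 r i : A) • h else 0 := by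
    intro i _
    have hmem : (DirectSum.decompose 𝒜 r i : A) • h ∈ ℳ (i + d) :=
      hℳ i d _ (SetLike.coe_mem _) h hh
    by_cases hi : i = n - d
    · subst hi
      rw [if_pos rfl, projM_apply]
      have he : n - d + d = n := by omega
      exact DirectSum.decompose_of_mem_same ℳ (by rwa [he] at hmem)
    · rw [if_neg hi, projM_apply]
      exact DirectSum.decompose_of_mem_ne ℳ hmem (by omega)
  rw [Finset.sum_congr rfl step, Finset.sum_ite_eq']
  by_cases hnd : n - d ∈ (DirectSum.decompose 𝒜 r).support
  · rw [if_pos hnd]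
  · rw [if_neg hnd]
    rw [DFinsupp.notMem_support_iff] at hnd
    rw [hnd, ZeroMemClass.coe_zero, zero_smul]

lemma exists_pow_smul_eq_zero_of_bot
    (𝒜 : ℤ → Submodule ℤ A) [GradedAlgebra 𝒜] {a : A} (ha : a ∈ 𝒜 1)
    (ℳ : ℤ → AddSubgroup M) [DirectSum.Decomposition ℳ]
    (hℳ : ∀ (i j : ℤ), ∀ c ∈ 𝒜 i, ∀ m ∈ ℳ j, c • m ∈ ℳ (i + j))
    (hbot : modDegZero 𝒜 a M ℳ = ⊥) (x : M) : ∃ k : ℕ, a ^ k • x = 0 := by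
  classical
  have key := (modDegZero_eq_bot_iff 𝒜 a M ℳ).mp hbot
  have h0 : ∀ (n : ℕ) (m : M), m ∈ ℳ (n : ℤ) → ∃ k : ℕ, a ^ k • m = 0 := by
    intro n m hm
    have hy : (a ^ n : A) • (LocalizedModule.mk m ⟨a ^ n, Submonoid.pow_mem _ (Submonoid.mem_powers a) n⟩ :
        LocalizedModule (Submonoid.powers a) M) = LocalizedModule.mk m 1 := by
      rw [LocalizedModule.smul'_mk]
      exact LocalizedModule.mk_cancel ⟨a ^ n, Submonoid.pow_mem _ (Submonoid.mem_powers a) n⟩ m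
    have hz := key _ ⟨n, m, hm, hy⟩
    rw [← LocalizedModule.zero_mk (1 : Submonoid.powers a), LocalizedModule.mk_eq] at hz
    obtain ⟨u, hu⟩ := hz
    obtain ⟨k, hk⟩ := (Submonoid.mem_powers_iff _ _).mp u.2
    refine ⟨k, ?_⟩
    simp only [one_smul, smul_zero, Submonoid.smul_def] at hu
    rw [← hk] at hu
    exact hu
  have h1 : ∀ (j : ℤ) (m : M), m ∈ ℳ j → ∃ k : ℕ, a ^ k • m = 0 := by
    intro j m hm
    set t : ℕ := (-j).toNat with ht
    have hat : a ^ t ∈ 𝒜 (t : ℤ) := by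
      simpa using SetLike.pow_mem_graded t ha
    have hm' : a ^ t • m ∈ ℳ ((t : ℤ) + j) := hℳ t j _ hat m hm
    have hc : (((((t : ℤ) + j).toNat : ℕ) : ℤ)) = (t : ℤ) + j := by omega
    obtain ⟨k, hk⟩ := h0 ((t : ℤ) + j).toNat (a ^ t • m) (by rw [hc]; exact hm')
    exact ⟨k + t, by rw [pow_add, mul_smul]; exact hk⟩
  let N : Submodule A M :=
  { carrier := {x | ∃ k : ℕ, a ^ k • x = 0}
    add_mem' := by
      rintro x y ⟨k, hk⟩ ⟨l, hl⟩
      have hx : a ^ (k + l) • x = 0 := by rw [pow_add, mul_comm, mul_smul, hk, smul_zero]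
      have hy : a ^ (k + l) • y = 0 := by rw [pow_add, mul_smul, hl, smul_zero]
      exact ⟨k + l, by rw [smul_add, hx, hy, add_zero]⟩
    zero_mem' := ⟨0, smul_zero _⟩
    smul_mem' := by
      rintro c x ⟨k, hk⟩
      exact ⟨k, by rw [smul_comm, hk, smul_zero]⟩ }
  have : x ∈ N := by
    rw [← DirectSum.sum_support_decompose ℳ x]
    exact Submodule.sum_mem _ fun i _ => h1 i _ (SetLike.coe_mem _)
  exact this

lemma pow_ann [Module.Finite A M] {a : A} (hax : ∀ x : M, ∃ k : ℕ, a ^ k • x = 0) :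
    ∃ k : ℕ, ∀ x : M, a ^ k • x = 0 := by
  classical
  obtain ⟨s, hs⟩ := Module.Finite.fg_top (R := A) (M := M)
  choose f hf using hax
  refine ⟨s.sup f, fun x => ?_⟩
  have hx : x ∈ Submodule.span A (s : Set M) := hs ▸ Submodule.mem_top
  let N : Submodule A M :=
  { carrier := {y | a ^ s.sup f • y = 0}
    add_mem' := by
      rintro y z hy hz
      show a ^ s.sup f • (y + z) = 0
      rw [smul_add, hy, hz, add_zero]
    zero_mem' := smul_zero _
    smul_mem' := by
      rintro c y hy
      show a ^ s.sup f • (c • y) = 0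
      rw [smul_comm, hy, smul_zero] }
  have hsub : (s : Set M) ⊆ N := by
    intro g hg
    show a ^ s.sup f • g = 0
    have h1 : f g ≤ s.sup f := Finset.le_sup hg
    rw [← Nat.sub_add_cancel h1, pow_add, mul_smul, hf g, smul_zero]
  exact Submodule.span_le.mpr hsub hx

lemma component_mem_pow
    (𝒜 : ℤ → Submodule ℤ A) [GradedAlgebra 𝒜]
    (hA : ∀ n : ℤ, n < 0 → 𝒜 n = ⊥)
    (hgen : Subring.closure ((𝒜 0 : Set A) ∪ (𝒜 1 : Set A)) = ⊤)
    (x : A) (k : ℤ) :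
    (DirectSum.decompose 𝒜 x k : A) ∈ Ideal.span (𝒜 1 : Set A) ^ k.toNat := by
  classical
  set I := Ideal.span (𝒜 1 : Set A) with hI
  have hneg : ∀ (y : A) (i : ℤ), i < 0 → (DirectSum.decompose 𝒜 y i : A) = 0 := by
    intro y i hi
    exact (Submodule.eq_bot_iff _).mp (hA i hi) _ (SetLike.coe_mem _)
  let R : Subring A :=
  { carrier := {y | ∀ i : ℤ, (DirectSum.decompose 𝒜 y i : A) ∈ I ^ i.toNat}
    zero_mem' := by
      intro i
      rw [DirectSum.decompose_zero]
      simp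
    one_mem' := by
      intro i
      by_cases hi : i = 0
      · subst hi; simp
      · rw [DirectSum.decompose_of_mem_ne 𝒜 (SetLike.one_mem_graded 𝒜) (Ne.symm hi)]
        exact zero_mem _
    add_mem' := by
      intro y z hy hz i
      rw [DirectSum.decompose_add]
      simpa using add_mem (hy i) (hz i)
    neg_mem' := by
      intro y hy i
      have he : (DirectSum.decompose 𝒜 (-y) i : A) = -(DirectSum.decompose 𝒜 y i : A) := by
        rw [DirectSum.decompose_neg]
        rfl
      rw [he]
      exact neg_mem (hy i)
    mul_mem' := by
      intro y z hy hz i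
      rw [DirectSum.decompose_mul, DirectSum.coe_mul_apply]
      refine Submodule.sum_mem _ ?_
      rintro ⟨p, q⟩ hpq
      simp only [Finset.mem_filter, Finset.mem_product] at hpq
      rcases lt_or_ge p 0 with hp | hp
      · rw [hneg y p hp, zero_mul]; exact zero_mem _
      rcases lt_or_ge q 0 with hq | hq
      · rw [hneg z q hq, mul_zero]; exact zero_mem _
      have he : i.toNat = p.toNat + q.toNat := by omega
      rw [he, pow_add]
      exact Ideal.mul_mem_mul (hy p) (hz q) }
  have htop : (⊤ : Subring A) ≤ R := by
    rw [← hgen]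
    refine Subring.closure_le.mpr ?_
    rintro y (hy | hy)
    · intro i
      by_cases hi : i = 0
      · subst hi; simp
      · rw [DirectSum.decompose_of_mem_ne 𝒜 hy (Ne.symm hi)]
        exact zero_mem _
    · intro i
      by_cases hi : i = 1
      · subst hi
        rw [DirectSum.decompose_of_mem_same 𝒜 hy]
        simpa using Ideal.subset_span hy
      · rw [DirectSum.decompose_of_mem_ne 𝒜 hy (Ne.symm hi)]
        exact zero_mem _
  have hx : ∀ i : ℤ, (DirectSum.decompose 𝒜 x i : A) ∈ I ^ i.toNat :=
    htop (Subring.mem_top x)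
  exact hx k

end Aux

/-- for an ℕ-graded commutative Noetherian ring `A` generated over `A₀` by
degree-one elements and a finitely generated ℤ-graded `A`-module `M`, one has `M[a⁻¹]₀ = 0`
for every homogeneous `a` of degree 1 if and only if `M` vanishes in all sufficiently
large degrees. -/
theorem stmt4 (𝒜 : ℤ → Submodule ℤ A) [GradedAlgebra 𝒜]
    (hA : ∀ n : ℤ, n < 0 → 𝒜 n = ⊥)
    (hNoeth : IsNoetherianRing A)
    (hgen : Subring.closure ((𝒜 0 : Set A) ∪ (𝒜 1 : Set A)) = ⊤)
    {M : Type*} [AddCommGroup M] [Module A M] [Module.Finite A M]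
    (ℳ : ℤ → AddSubgroup M) [DirectSum.Decomposition ℳ]
    (hℳ : ∀ (i j : ℤ), ∀ c ∈ 𝒜 i, ∀ m ∈ ℳ j, c • m ∈ ℳ (i + j)) :
    (∀ a ∈ 𝒜 1, modDegZero 𝒜 a M ℳ = ⊥) ↔ (∃ N : ℤ, ∀ n ≥ N, ℳ n = ⊥) := by
  haveI := hNoeth
  constructor
  · intro hyp
    classical
    set I : Ideal A := Ideal.span ((𝒜 1 : Submodule ℤ A) : Set A) with hIdef
    set Ann : Ideal A := (⊤ : Submodule A M).annihilator with hAnndef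
    have hIrad : I ≤ Ann.radical := by
      rw [hIdef, Ideal.span_le]
      intro a ha
      obtain ⟨k, hk⟩ := pow_ann
        (fun x => exists_pow_smul_eq_zero_of_bot 𝒜 ha ℳ hℳ (hyp a ha) x)
      exact ⟨k, Submodule.mem_annihilator.mpr fun x _ => hk x⟩
    obtain ⟨K, hK⟩ := Ideal.exists_radical_pow_le_of_fg Ann (IsNoetherian.noetherian _)
    have hIK : I ^ K ≤ Ann := le_trans (Ideal.pow_right_mono hIrad K) hK
    obtain ⟨s, hs⟩ := Module.Finite.fg_top (R := A) (M := M)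
    set D : ℕ := s.sup fun g => (DirectSum.decompose ℳ g).support.sup (fun i => i.toNat)
      with hD
    refine ⟨(D : ℤ) + K, fun n hn => ?_⟩
    rw [AddSubgroup.eq_bot_iff_forall]
    intro m hm
    have hms : m ∈ Submodule.span A (s : Set M) := hs ▸ Submodule.mem_top
    obtain ⟨f, -, hf⟩ := Submodule.mem_span_finset.mp hms
    have key : (DirectSum.decompose ℳ m n : M) = 0 := by
      rw [← projM_apply, ← hf, map_sum]
      refine Finset.sum_eq_zero fun g hg => ?_
      have hg' : f g • g = ∑ d ∈ (DirectSum.decompose ℳ g).support,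
          f g • (DirectSum.decompose ℳ g d : M) := by
        rw [← Finset.smul_sum, DirectSum.sum_support_decompose]
      rw [hg', map_sum]
      refine Finset.sum_eq_zero fun d hd => ?_
      rw [projM_apply, decompose_smul_homog 𝒜 ℳ hℳ (f g) (SetLike.coe_mem _) n]
      have hdD : d ≤ (D : ℤ) := by
        have h1 : d.toNat ≤ (DirectSum.decompose ℳ g).support.sup (fun i => i.toNat) :=
          Finset.le_sup hd
        have h2 : (DirectSum.decompose ℳ g).support.sup (fun i => i.toNat) ≤ D :=
          Finset.le_sup (f := fun g => (DirectSum.decompose ℳ g).support.sup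
            (fun i => i.toNat)) hg
        omega
      have hcoef : (DirectSum.decompose 𝒜 (f g) (n - d) : A) ∈ Ann := by
        have h1 := component_mem_pow 𝒜 hA hgen (f g) (n - d)
        have h2 : I ^ (n - d).toNat ≤ I ^ K := Ideal.pow_le_pow_right (by omega)
        exact hIK (h2 (by rw [hIdef]; exact h1))
      rw [Submodule.mem_annihilator.mp hcoef _ Submodule.mem_top]
    rw [DirectSum.decompose_of_mem_same ℳ hm] at key
    exact key
  · rintro ⟨N, hN⟩ a ha
    rw [modDegZero_eq_bot_iff]
    rintro y ⟨n, m, hm, hy⟩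
    set k : ℕ := (N - n).toNat with hkdef
    have hak : (a : A) ^ k ∈ 𝒜 (k : ℤ) := by
      simpa using SetLike.pow_mem_graded k ha
    have hkm : a ^ k • m = 0 := by
      have hmem := hℳ k n _ hak m hm
      rw [hN ((k : ℤ) + n) (by omega)] at hmem
      simpa using hmem
    have hmk : (LocalizedModule.mk m 1 : LocalizedModule (Submonoid.powers a) M) = 0 := by
      rw [← LocalizedModule.zero_mk (1 : Submonoid.powers a), LocalizedModule.mk_eq]
      refine ⟨⟨a ^ k, Submonoid.pow_mem _ (Submonoid.mem_powers a) k⟩, ?_⟩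
      simp only [one_smul, smul_zero, Submonoid.smul_def]
      exact hkm
    rw [hmk] at hy
    have hu : IsUnit ((algebraMap A (Localization (Submonoid.powers a))) (a ^ n)) :=
      IsLocalization.map_units (Localization (Submonoid.powers a))
        ⟨a ^ n, Submonoid.pow_mem _ (Submonoid.mem_powers a) n⟩
    rw [← algebraMap_smul (Localization (Submonoid.powers a)) (a ^ n) y] at hy
    exact hu.smul_eq_zero.mp hy
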